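/- Let U and M be finite sets and let U_f be a nonempty subset of U for each f ∈ M. Then the maximum cardinality of a subset F ⊆ M for which (U_f)_{f∈F} has a forest representative system equals min over partitions W of U of |M| - Σ_{W∈W} ( |{f ∈ M : U_f ⊆ W}| - (|W| - 1) ). -/

import Mathlib

open Finset
open scoped Classical
set_option linter.unusedSectionVars false
set_option linter.unusedTactic false
set_option maxHeartbeats 1000000

/-- `(e f)_{f ∈ F}` is a forest representative system for `(Uf f)_{f ∈ F}`:
pairwise distinct 2-element subsets `e f ⊆ Uf f` whose union is a forest. -/
def IsFRS {U M : Type} [DecidableEq U] (Uf : M → Finset U) (F : Finset M)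
    (e : M → Sym2 U) : Prop :=
  (∀ f ∈ F, ¬ (e f).IsDiag ∧ ∀ x ∈ e f, x ∈ Uf f) ∧
  Set.InjOn e ↑F ∧
  (SimpleGraph.fromEdgeSet {s | ∃ f ∈ F, e f = s}).IsAcyclic

namespace FRS

variable {V : Type} [Fintype V] [DecidableEq V]

/-- Connectivity relation induced by a finite set of edges. -/
def conn (S : Finset (Sym2 V)) : V → V → Prop :=
  Relation.ReflTransGen (fun a b => s(a, b) ∈ S)

lemma conn_mono {S T : Finset (Sym2 V)} (h : S ⊆ T) {a b : V} (hab : conn S a b) :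
    conn T a b :=
  Relation.ReflTransGen.mono (fun _ _ hm => h hm) _ _ hab

lemma conn_symm {S : Finset (Sym2 V)} {a b : V} (h : conn S a b) : conn S b a := by
  induction h with
  | refl => exact Relation.ReflTransGen.refl
  | tail _ h2 ih =>
      refine Relation.ReflTransGen.trans (Relation.ReflTransGen.single ?_) ih
      rwa [Sym2.eq_swap]

lemma conn_step {S : Finset (Sym2 V)} {a b : V} (h : s(a,b) ∈ S) : conn S a b :=
  Relation.ReflTransGen.single h

def connSetoid (S : Finset (Sym2 V)) : Setoid V :=
  ⟨conn S, ⟨fun _ => Relation.ReflTransGen.refl, conn_symm, Relation.ReflTransGen.trans⟩⟩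

noncomputable instance (S : Finset (Sym2 V)) : Fintype (Quotient (connSetoid S)) :=
  @Quotient.fintype V _ (connSetoid S) (Classical.decRel _)

/-- Number of connected components (all of `V`). -/
noncomputable def ncomp (S : Finset (Sym2 V)) : ℕ :=
  Fintype.card (Quotient (connSetoid S))

lemma conn_of_mk_eq {S : Finset (Sym2 V)} {a b : V}
    (h : (Quotient.mk (connSetoid S) a) = Quotient.mk (connSetoid S) b) : conn S a b :=
  Quotient.exact h

lemma mk_eq_of_conn {S : Finset (Sym2 V)} {a b : V} (h : conn S a b) :
    (Quotient.mk (connSetoid S) a) = Quotient.mk (connSetoid S) b :=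
  Quotient.sound h

/-- Upper bound on component count via a covering set. -/
lemma ncomp_le_of_cover {S : Finset (Sym2 V)} {R : Finset V}
    (hR : ∀ v : V, ∃ r ∈ R, conn S v r) : ncomp S ≤ R.card := by
  have : Fintype.card (Quotient (connSetoid S)) ≤ Fintype.card R := by
    apply Fintype.card_le_of_surjective (fun r : R => Quotient.mk (connSetoid S) (r : V))
    intro q
    induction q using Quotient.inductionOn with
    | h v =>
      obtain ⟨r, hrR, hconn⟩ := hR v
      exact ⟨⟨r, hrR⟩, mk_eq_of_conn (conn_symm hconn)⟩
  simpa [ncomp, Fintype.card_coe] using this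

/-- Lower bound on component count via a map constant on components. -/
lemma le_ncomp_of_map {S : Finset (Sym2 V)} {P : Type} [Fintype P] (g : V → P)
    (hconst : ∀ a b : V, conn S a b → g a = g b) (hsurj : Function.Surjective g) :
    Fintype.card P ≤ ncomp S := by
  apply Fintype.card_le_of_surjective
    (Quotient.lift g (fun a b h => hconst a b h) : Quotient (connSetoid S) → P)
  intro p
  obtain ⟨v, rfl⟩ := hsurj p
  exact ⟨Quotient.mk _ v, rfl⟩

lemma ncomp_le_card (S : Finset (Sym2 V)) : ncomp S ≤ Fintype.card V := by
  have := ncomp_le_of_cover (S := S) (R := Finset.univ)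
    (fun v => ⟨v, Finset.mem_univ v, Relation.ReflTransGen.refl⟩)
  simpa using this

lemma ncomp_anti {S T : Finset (Sym2 V)} (h : S ⊆ T) : ncomp T ≤ ncomp S := by
  apply Fintype.card_le_of_surjective
    (Quotient.lift (fun v => Quotient.mk (connSetoid T) v)
      (fun a b hab => Quotient.sound (conn_mono h hab)) :
      Quotient (connSetoid S) → Quotient (connSetoid T))
  intro q
  induction q using Quotient.inductionOn with
  | h v => exact ⟨Quotient.mk _ v, rfl⟩

lemma ncomp_empty : ncomp (∅ : Finset (Sym2 V)) = Fintype.card V := by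
  have h1 : ncomp (∅ : Finset (Sym2 V)) ≤ Fintype.card V := ncomp_le_card _
  have h2 : Fintype.card V ≤ ncomp (∅ : Finset (Sym2 V)) := by
    apply le_ncomp_of_map (g := id)
    · intro a b hab
      induction hab with
      | refl => rfl
      | tail _ h2 _ => simp at h2
    · exact Function.surjective_id
  omega

lemma conn_insert_iff {S : Finset (Sym2 V)} {x y a b : V} :
    conn (insert s(x,y) S) a b ↔
      conn S a b ∨ (conn S a x ∧ conn S y b) ∨ (conn S a y ∧ conn S x b) := by
  constructor
  · intro h
    induction h with
    | refl => exact Or.inl Relation.ReflTransGen.refl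
    | @tail c d hac hcd ih =>
        rcases Finset.mem_insert.mp hcd with hεd | hS
        · have hcd' : (c = x ∧ d = y) ∨ (c = y ∧ d = x) := by
            rw [Sym2.eq_iff] at hεd; tauto
          rcases ih with h1 | ⟨h2, h3⟩ | ⟨h2, h3⟩
          · rcases hcd' with ⟨rfl, rfl⟩ | ⟨rfl, rfl⟩
            · exact Or.inr (Or.inl ⟨h1, Relation.ReflTransGen.refl⟩)
            · exact Or.inr (Or.inr ⟨h1, Relation.ReflTransGen.refl⟩)
          · rcases hcd' with ⟨rfl, rfl⟩ | ⟨rfl, rfl⟩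
            · exact Or.inr (Or.inl ⟨h2, Relation.ReflTransGen.refl⟩)
            · exact Or.inl h2
          · rcases hcd' with ⟨rfl, rfl⟩ | ⟨rfl, rfl⟩
            · exact Or.inl h2
            · exact Or.inl (h2.trans (conn_symm h3))
        · rcases ih with h1 | ⟨h2, h3⟩ | ⟨h2, h3⟩
          · exact Or.inl (h1.tail hS)
          · exact Or.inr (Or.inl ⟨h2, h3.tail hS⟩)
          · exact Or.inr (Or.inr ⟨h2, h3.tail hS⟩)
  · have hsub : S ⊆ insert s(x,y) S := Finset.subset_insert _ _
    have hxy : conn (insert s(x,y) S) x y := conn_step (Finset.mem_insert_self _ _)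
    rintro (h | ⟨h1, h2⟩ | ⟨h1, h2⟩)
    · exact conn_mono hsub h
    · exact ((conn_mono hsub h1).trans hxy).trans (conn_mono hsub h2)
    · exact ((conn_mono hsub h1).trans (conn_symm hxy)).trans (conn_mono hsub h2)

-- BEGIN
lemma ncomp_insert_of_conn {S : Finset (Sym2 V)} {x y : V} (h : conn S x y) :
    ncomp (insert s(x,y) S) = ncomp S := by
  have h1 : ncomp (insert s(x,y) S) ≤ ncomp S := ncomp_anti (Finset.subset_insert _ _)
  have h2 : ncomp S ≤ ncomp (insert s(x,y) S) := by
    apply le_ncomp_of_map (g := fun v => Quotient.mk (connSetoid S) v)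
    · intro a b hab
      apply mk_eq_of_conn
      rcases conn_insert_iff.mp hab with h' | ⟨ha, hb⟩ | ⟨ha, hb⟩
      · exact h'
      · exact (ha.trans h).trans hb
      · exact (ha.trans (conn_symm h)).trans hb
    · exact Quotient.mk_surjective
  omega

lemma ncomp_insert_of_not_conn {S : Finset (Sym2 V)} {x y : V} (h : ¬ conn S x y) :
    ncomp (insert s(x,y) S) + 1 = ncomp S := by
  -- upper bound: cover by class representatives of S, dropping the rep of y's class
  have hxy_ne : (Quotient.mk (connSetoid S) x) ≠ Quotient.mk (connSetoid S) y :=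
    fun hq => h (conn_of_mk_eq hq)
  set R0 : Finset V :=
    Finset.univ.image (fun q : Quotient (connSetoid S) => q.out) with hR0
  have houtconn : ∀ v : V, conn S v ((Quotient.mk (connSetoid S) v).out) := by
    intro v
    apply conn_of_mk_eq
    simp
  have hmemR0 : ∀ v : V, (Quotient.mk (connSetoid S) v).out ∈ R0 := by
    intro v; exact Finset.mem_image_of_mem _ (Finset.mem_univ _)
  have hR0card : R0.card ≤ ncomp S := by
    simpa [ncomp] using Finset.card_image_le (s := (Finset.univ : Finset (Quotient (connSetoid S))))
      (f := fun q => q.out)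
  have hout_inj : Function.Injective (fun q : Quotient (connSetoid S) => q.out) :=
    Quotient.out_injective
  have hub : ncomp (insert s(x,y) S) ≤ R0.card - 1 := by
    have hcover : ∀ v : V, ∃ r ∈ R0.erase ((Quotient.mk (connSetoid S) y).out),
        conn (insert s(x,y) S) v r := by
      intro v
      by_cases hvy : conn S v y
      · refine ⟨(Quotient.mk (connSetoid S) x).out, ?_, ?_⟩
        · exact Finset.mem_erase.mpr ⟨fun he => hxy_ne (hout_inj he), hmemR0 x⟩
        · have : conn (insert s(x,y) S) v x := by
            refine (conn_mono (Finset.subset_insert _ _) hvy).trans ?_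
            exact conn_symm (conn_step (Finset.mem_insert_self _ _))
          exact this.trans (conn_mono (Finset.subset_insert _ _) (houtconn x))
      · refine ⟨(Quotient.mk (connSetoid S) v).out, ?_, ?_⟩
        · refine Finset.mem_erase.mpr ⟨fun he => ?_, hmemR0 v⟩
          have : (Quotient.mk (connSetoid S) v) = Quotient.mk (connSetoid S) y := hout_inj he
          exact hvy (conn_of_mk_eq this)
        · exact conn_mono (Finset.subset_insert _ _) (houtconn v)
    calc ncomp (insert s(x,y) S) ≤ (R0.erase ((Quotient.mk (connSetoid S) y).out)).card :=
          ncomp_le_of_cover hcover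
      _ = R0.card - 1 := Finset.card_erase_of_mem (hmemR0 y)
  -- lower bound: map to classes of S except the class of y
  have hlb : ncomp S - 1 ≤ ncomp (insert s(x,y) S) := by
    have hcard : Fintype.card {q : Quotient (connSetoid S) // q ≠ Quotient.mk (connSetoid S) y}
        = ncomp S - 1 := by
      rw [Fintype.card_subtype_compl, Fintype.card_subtype_eq]
      rfl
    rw [← hcard]
    apply le_ncomp_of_map
      (g := fun v => if hv : conn S v y then
          (⟨Quotient.mk (connSetoid S) x, fun hq => h (conn_of_mk_eq hq)⟩ :
            {q : Quotient (connSetoid S) // q ≠ Quotient.mk (connSetoid S) y})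
        else ⟨Quotient.mk (connSetoid S) v, fun hq => hv (conn_of_mk_eq hq)⟩)
    · intro a b hab
      rcases conn_insert_iff.mp hab with h' | ⟨ha, hb⟩ | ⟨ha, hb⟩
      · by_cases hay : conn S a y
        · have hby : conn S b y := (conn_symm h').trans hay
          simp [hay, hby]
        · have hby : ¬ conn S b y := fun hb' => hay (h'.trans hb')
          simp only [hay, hby, dif_neg, not_false_iff]
          exact Subtype.ext (mk_eq_of_conn h')
      · -- ha : conn S a x, hb : conn S y b
        have hay : ¬ conn S a y := fun h' => h ((conn_symm ha).trans h')
        have hby : conn S b y := conn_symm hb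
        simp only [hay, hby, dif_neg, dif_pos, not_false_iff]
        exact Subtype.ext (mk_eq_of_conn ha)
      · -- ha : conn S a y, hb : conn S x b
        have hby : ¬ conn S b y := fun h' => h (hb.trans h')
        simp only [ha, hby, dif_pos, dif_neg, not_false_iff]
        exact Subtype.ext (mk_eq_of_conn hb)
    · rintro ⟨q, hq⟩
      induction q using Quotient.inductionOn with
      | h v =>
        have hvy : ¬ conn S v y := fun h' => hq (mk_eq_of_conn h')
        exact ⟨v, by simp [hvy]⟩
  have hpos : 1 ≤ ncomp S := by
    have : (0 : ℕ) < Fintype.card (Quotient (connSetoid S)) := Fintype.card_pos_iff.mpr ⟨Quotient.mk _ y⟩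
    exact this
  have h1R : 1 ≤ R0.card := Finset.card_pos.mpr ⟨_, hmemR0 y⟩
  omega
-- BEGIN
lemma ncomp_insert_cases (S : Finset (Sym2 V)) (ε : Sym2 V) :
    ncomp (insert ε S) = ncomp S ∨ ncomp (insert ε S) + 1 = ncomp S := by
  induction ε using Sym2.inductionOn with
  | hf x y =>
    by_cases h : conn S x y
    · exact Or.inl (ncomp_insert_of_conn h)
    · exact Or.inr (ncomp_insert_of_not_conn h)

lemma card_le_card_add_ncomp (S : Finset (Sym2 V)) :
    Fintype.card V ≤ S.card + ncomp S := by
  induction S using Finset.induction with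
  | empty => simp [ncomp_empty]
  | @insert ε S hε ih =>
    rcases ncomp_insert_cases S ε with h | h <;>
      rw [Finset.card_insert_of_notMem hε] <;> omega

/-- The combinatorial forest predicate. -/
def Forest (S : Finset (Sym2 V)) : Prop :=
  S.card + ncomp S ≤ Fintype.card V

lemma forest_card_add_ncomp {S : Finset (Sym2 V)} (h : Forest S) :
    S.card + ncomp S = Fintype.card V :=
  le_antisymm h (card_le_card_add_ncomp S)

lemma card_add_ncomp_le_insert (S : Finset (Sym2 V)) (ε : Sym2 V) :
    S.card + ncomp S ≤ (insert ε S).card + ncomp (insert ε S) := by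
  by_cases hε : ε ∈ S
  · rw [Finset.insert_eq_self.mpr hε]
  · rcases ncomp_insert_cases S ε with h | h <;>
      rw [Finset.card_insert_of_notMem hε] <;> omega

lemma Forest.mono {S T : Finset (Sym2 V)} (hT : T ⊆ S) (h : Forest S) : Forest T := by
  classical
  have key : ∀ S : Finset (Sym2 V), ∀ T ⊆ S,
      T.card + ncomp T ≤ S.card + ncomp S := by
    intro S
    induction S using Finset.strongInduction with
    | _ S ih =>
      intro T hTS
      rcases eq_or_ssubset_of_subset hTS with rfl | hss
      · exact le_refl _
      · obtain ⟨ε, hεS, hεT⟩ := Finset.exists_of_ssubset hss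
        have hT' : T ⊆ S.erase ε := fun a ha =>
          Finset.mem_erase.mpr ⟨fun he => hεT (he ▸ ha), hss.subset ha⟩
        have h1 := ih (S.erase ε) (Finset.erase_ssubset hεS) T hT'
        have h2 := card_add_ncomp_le_insert (S.erase ε) ε
        rw [Finset.insert_erase hεS] at h2
        exact le_trans h1 h2
  exact le_trans (key S T hT) h

lemma ncomp_union_supermod (D A B : Finset (Sym2 V)) (hAB : A ⊆ B) :
    ncomp B + ncomp (A ∪ D) ≤ ncomp A + ncomp (B ∪ D) := by
  classical
  induction D using Finset.induction with
  | empty => simp; omega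
  | @insert ε D hε ih =>
    have hsub : A ∪ D ⊆ B ∪ D := Finset.union_subset_union hAB (Finset.Subset.refl _)
    have step : ncomp (B ∪ D) + ncomp (insert ε (A ∪ D)) ≤
        ncomp (A ∪ D) + ncomp (insert ε (B ∪ D)) := by
      induction ε using Sym2.inductionOn with
      | hf x y =>
        by_cases hB : conn (B ∪ D) x y
        · rw [ncomp_insert_of_conn hB]
          by_cases hA : conn (A ∪ D) x y
          · rw [ncomp_insert_of_conn hA]; omega
          · have := ncomp_insert_of_not_conn hA; omega
        · have hA : ¬ conn (A ∪ D) x y := fun h => hB (conn_mono hsub h)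
          have h1 := ncomp_insert_of_not_conn hB
          have h2 := ncomp_insert_of_not_conn hA
          omega
    rw [Finset.union_insert, Finset.union_insert]
    omega
-- BEGIN
section Rado
variable {M : Type} [Fintype M] [DecidableEq M]

/-- Rado-type selection theorem for the graphic matroid. -/
lemma rado_aux (N : ℕ) :
    ∀ (E : M → Finset (Sym2 V)), (∑ f : M, (E f).card) ≤ N →
    (∀ F' : Finset M, (F'.card : ℤ) ≤ (Fintype.card V : ℤ) - ncomp (F'.sup E)) →
    ∃ e : M → Sym2 V, (∀ f, e f ∈ E f) ∧ Function.Injective e ∧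
      Forest (Finset.univ.image e) := by
  induction N using Nat.strong_induction_on with
  | _ N ih =>
    intro E hN cond
    by_cases hbase : ∀ f, (E f).card ≤ 1
    · -- base case : all candidate sets are singletons
      have hne : ∀ f, (E f).Nonempty := by
        intro f
        rcases Finset.eq_empty_or_nonempty (E f) with he | hne
        · exfalso
          have := cond {f}
          rw [Finset.sup_singleton, he, ncomp_empty] at this
          simp at this
        · exact hne
      set e : M → Sym2 V := fun f => (hne f).choose with he_def
      have hmem : ∀ f, e f ∈ E f := fun f => (hne f).choose_spec
      have hsingle : ∀ f, E f = {e f} := by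
        intro f
        apply Finset.eq_singleton_iff_unique_mem.mpr
        refine ⟨hmem f, fun a ha => ?_⟩
        have h1 := hbase f
        have := Finset.card_le_one.mp h1 a ha (e f) (hmem f)
        exact this
      have hsup : Finset.univ.sup E = Finset.univ.image e := by
        have : Finset.univ.sup E = Finset.univ.sup (fun f => ({e f} : Finset (Sym2 V))) := by
          apply Finset.sup_congr rfl
          intro f _
          exact hsingle f
        rw [this, Finset.sup_singleton_apply]
      have hcard : (Fintype.card M : ℤ) ≤
          (Fintype.card V : ℤ) - ncomp (Finset.univ.image e) := by
        have := cond Finset.univ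
        rwa [hsup, Finset.card_univ] at this
      set S := Finset.univ.image e with hS
      have hle : Fintype.card V ≤ S.card + ncomp S := card_le_card_add_ncomp S
      have himg : S.card ≤ Fintype.card M := by
        simpa using Finset.card_image_le (s := (Finset.univ : Finset M)) (f := e)
      have hcard' : Fintype.card M + ncomp S ≤ Fintype.card V := by exact_mod_cast
        (by linarith : ((Fintype.card M : ℤ) + ncomp S ≤ (Fintype.card V : ℤ)))
      have hScard : S.card = Fintype.card M := by omega
      have hforest : Forest S := by unfold Forest; omega
      have hinj : Function.Injective e := by
        rw [← Set.injOn_univ, ← Finset.coe_univ]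
        apply Finset.card_image_iff.mp
        rw [hScard, Finset.card_univ]
      exact ⟨e, hmem, hinj, hforest⟩
    · push_neg at hbase
      obtain ⟨f₀, hf₀⟩ := hbase
      have h2 : 2 ≤ (E f₀).card := hf₀
      obtain ⟨x, hx, y, hy, hxy⟩ := Finset.one_lt_card.mp h2
      set E1 : M → Finset (Sym2 V) := Function.update E f₀ ((E f₀).erase x) with hE1
      set E2 : M → Finset (Sym2 V) := Function.update E f₀ ((E f₀).erase y) with hE2
      have hsub1 : ∀ f, E1 f ⊆ E f := by
        intro f
        by_cases hf : f = f₀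
        · subst hf; rw [hE1, Function.update_self]; exact Finset.erase_subset _ _
        · rw [hE1, Function.update_of_ne hf]
      have hsub2 : ∀ f, E2 f ⊆ E f := by
        intro f
        by_cases hf : f = f₀
        · subst hf; rw [hE2, Function.update_self]; exact Finset.erase_subset _ _
        · rw [hE2, Function.update_of_ne hf]
      have hsum1 : (∑ f : M, (E1 f).card) < N := by
        have h1 : (∑ f : M, (E1 f).card) =
            ((E f₀).erase x).card + ∑ f ∈ Finset.univ.erase f₀, (E f).card := by
          rw [← Finset.add_sum_erase _ _ (Finset.mem_univ f₀)]
          congr 1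
          · rw [hE1, Function.update_self]
          · apply Finset.sum_congr rfl
            intro f hf
            rw [hE1, Function.update_of_ne (Finset.mem_erase.mp hf).1]
        have h2' : (∑ f : M, (E f).card) =
            (E f₀).card + ∑ f ∈ Finset.univ.erase f₀, (E f).card := by
          rw [← Finset.add_sum_erase _ _ (Finset.mem_univ f₀)]
        have h3 : ((E f₀).erase x).card = (E f₀).card - 1 := Finset.card_erase_of_mem hx
        omega
      have hsum2 : (∑ f : M, (E2 f).card) < N := by
        have h1 : (∑ f : M, (E2 f).card) =
            ((E f₀).erase y).card + ∑ f ∈ Finset.univ.erase f₀, (E f).card := by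
          rw [← Finset.add_sum_erase _ _ (Finset.mem_univ f₀)]
          congr 1
          · rw [hE2, Function.update_self]
          · apply Finset.sum_congr rfl
            intro f hf
            rw [hE2, Function.update_of_ne (Finset.mem_erase.mp hf).1]
        have h2' : (∑ f : M, (E f).card) =
            (E f₀).card + ∑ f ∈ Finset.univ.erase f₀, (E f).card := by
          rw [← Finset.add_sum_erase _ _ (Finset.mem_univ f₀)]
        have h3 : ((E f₀).erase y).card = (E f₀).card - 1 := Finset.card_erase_of_mem hy
        omega
      by_cases hc1 : ∀ F' : Finset M, (F'.card : ℤ) ≤ (Fintype.card V : ℤ) - ncomp (F'.sup E1)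
      · obtain ⟨e, he, hinj, hf⟩ := ih _ hsum1 E1 le_rfl hc1
        exact ⟨e, fun f => hsub1 f (he f), hinj, hf⟩
      by_cases hc2 : ∀ F' : Finset M, (F'.card : ℤ) ≤ (Fintype.card V : ℤ) - ncomp (F'.sup E2)
      · obtain ⟨e, he, hinj, hf⟩ := ih _ hsum2 E2 le_rfl hc2
        exact ⟨e, fun f => hsub2 f (he f), hinj, hf⟩
      exfalso
      push_neg at hc1 hc2
      obtain ⟨F₁, hF₁⟩ := hc1
      obtain ⟨F₂, hF₂⟩ := hc2
      have hf₀1 : f₀ ∈ F₁ := by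
        by_contra hf₀1
        have : F₁.sup E1 = F₁.sup E := by
          apply Finset.sup_congr rfl
          intro f hf
          rw [hE1, Function.update_of_ne (by rintro rfl; exact hf₀1 hf)]
        rw [this] at hF₁
        exact absurd (cond F₁) (not_le.mpr hF₁)
      have hf₀2 : f₀ ∈ F₂ := by
        by_contra hf₀2
        have : F₂.sup E2 = F₂.sup E := by
          apply Finset.sup_congr rfl
          intro f hf
          rw [hE2, Function.update_of_ne (by rintro rfl; exact hf₀2 hf)]
        rw [this] at hF₂
        exact absurd (cond F₂) (not_le.mpr hF₂)
      set P := F₁.sup E1 with hP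
      set Q := F₂.sup E2 with hQ
      have hPQu : (F₁ ∪ F₂).sup E ⊆ P ∪ Q := by
        intro ε hε
        obtain ⟨f, hfmem, hεf⟩ := Finset.mem_sup.mp hε
        rcases Finset.mem_union.mp hfmem with hf1 | hf2
        · by_cases hf : f = f₀
          · subst hf
            by_cases hεx : ε = x
            · subst hεx
              apply Finset.mem_union_right
              apply Finset.mem_sup.mpr ⟨f, hf₀2, ?_⟩
              rw [hE2, Function.update_self]
              exact Finset.mem_erase.mpr ⟨hxy, hεf⟩
            · apply Finset.mem_union_left
              apply Finset.mem_sup.mpr ⟨f, hf1, ?_⟩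
              rw [hE1, Function.update_self]
              exact Finset.mem_erase.mpr ⟨hεx, hεf⟩
          · apply Finset.mem_union_left
            apply Finset.mem_sup.mpr ⟨f, hf1, ?_⟩
            rw [hE1, Function.update_of_ne hf]
            exact hεf
        · by_cases hf : f = f₀
          · subst hf
            by_cases hεy : ε = y
            · subst hεy
              apply Finset.mem_union_left
              apply Finset.mem_sup.mpr ⟨f, hf₀1, ?_⟩
              rw [hE1, Function.update_self]
              exact Finset.mem_erase.mpr ⟨fun h => hxy h.symm, hεf⟩
            · apply Finset.mem_union_right
              apply Finset.mem_sup.mpr ⟨f, hf2, ?_⟩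
              rw [hE2, Function.update_self]
              exact Finset.mem_erase.mpr ⟨hεy, hεf⟩
          · apply Finset.mem_union_right
            apply Finset.mem_sup.mpr ⟨f, hf2, ?_⟩
            rw [hE2, Function.update_of_ne hf]
            exact hεf
      have hPQi : ((F₁ ∩ F₂).erase f₀).sup E ⊆ P ∩ Q := by
        intro ε hε
        obtain ⟨f, hfmem, hεf⟩ := Finset.mem_sup.mp hε
        obtain ⟨hff₀, hfmem'⟩ := Finset.mem_erase.mp hfmem
        obtain ⟨hf1, hf2⟩ := Finset.mem_inter.mp hfmem'
        apply Finset.mem_inter.mpr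
        constructor
        · apply Finset.mem_sup.mpr ⟨f, hf1, ?_⟩
          rw [hE1, Function.update_of_ne hff₀]; exact hεf
        · apply Finset.mem_sup.mpr ⟨f, hf2, ?_⟩
          rw [hE2, Function.update_of_ne hff₀]; exact hεf
      have c1 := cond (F₁ ∪ F₂)
      have c2 := cond ((F₁ ∩ F₂).erase f₀)
      have n1 : ncomp (P ∪ Q) ≤ ncomp ((F₁ ∪ F₂).sup E) := ncomp_anti hPQu
      have n2 : ncomp (P ∩ Q) ≤ ncomp (((F₁ ∩ F₂).erase f₀).sup E) := ncomp_anti hPQi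
      have hsm : ncomp P + ncomp ((P ∩ Q) ∪ Q) ≤ ncomp (P ∩ Q) + ncomp (P ∪ Q) :=
        ncomp_union_supermod Q (P ∩ Q) P (Finset.inter_subset_left)
      have hQQ : (P ∩ Q) ∪ Q = Q := by
        apply Finset.union_eq_right.mpr
        exact Finset.inter_subset_right
      rw [hQQ] at hsm
      have hcards : (F₁ ∪ F₂).card + (F₁ ∩ F₂).card = F₁.card + F₂.card :=
        Finset.card_union_add_card_inter F₁ F₂
      have hercard : ((F₁ ∩ F₂).erase f₀).card = (F₁ ∩ F₂).card - 1 :=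
        Finset.card_erase_of_mem (Finset.mem_inter.mpr ⟨hf₀1, hf₀2⟩)
      have hinterpos : 1 ≤ (F₁ ∩ F₂).card :=
        Finset.card_pos.mpr ⟨f₀, Finset.mem_inter.mpr ⟨hf₀1, hf₀2⟩⟩
      have e1 : ((F₁ ∪ F₂).card : ℤ) ≤ (Fintype.card V : ℤ) - ncomp (P ∪ Q) := by
        have : (ncomp (P ∪ Q) : ℤ) ≤ (ncomp ((F₁ ∪ F₂).sup E) : ℤ) := by exact_mod_cast n1
        linarith
      have e2 : (((F₁ ∩ F₂).erase f₀).card : ℤ) ≤ (Fintype.card V : ℤ) - ncomp (P ∩ Q) := by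
        have : (ncomp (P ∩ Q) : ℤ) ≤ (ncomp (((F₁ ∩ F₂).erase f₀).sup E) : ℤ) := by
          exact_mod_cast n2
        linarith
      have e3 : (ncomp P : ℤ) + ncomp Q ≤ (ncomp (P ∩ Q) : ℤ) + ncomp (P ∪ Q) := by
        exact_mod_cast hsm
      have e4 : ((F₁ ∪ F₂).card : ℤ) + ((F₁ ∩ F₂).card : ℤ) = F₁.card + F₂.card := by
        exact_mod_cast hcards
      have e5 : (((F₁ ∩ F₂).erase f₀).card : ℤ) = ((F₁ ∩ F₂).card : ℤ) - 1 := by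
        rw [hercard]
        push_cast [hinterpos]
        omega
      linarith
end Rado
-- BEGIN
section Bridge

lemma isAcyclic_mono {G H : SimpleGraph V} (hGH : G ≤ H) (h : H.IsAcyclic) : G.IsAcyclic := by
  intro v c hc
  exact h (c.mapLe hGH) (hc.mapLe hGH)

lemma reachable_iff_conn {S : Finset (Sym2 V)} (hS : ∀ ε ∈ S, ¬ ε.IsDiag) (a b : V) :
    (SimpleGraph.fromEdgeSet (↑S : Set (Sym2 V))).Reachable a b ↔ conn S a b := by
  rw [SimpleGraph.reachable_iff_reflTransGen]
  constructor
  · exact Relation.ReflTransGen.mono (fun u v huv => by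
      rw [SimpleGraph.fromEdgeSet_adj] at huv
      exact huv.1) a b
  · refine Relation.ReflTransGen.mono (fun u v huv => ?_) a b
    rw [SimpleGraph.fromEdgeSet_adj]
    refine ⟨huv, fun he => hS _ huv ?_⟩
    rw [he] at huv ⊢
    simp
lemma fromEdgeSet_erase (S : Finset (Sym2 V)) (x y : V) :
    SimpleGraph.fromEdgeSet (↑S : Set (Sym2 V)) \ SimpleGraph.fromEdgeSet {s(x,y)} =
      SimpleGraph.fromEdgeSet (↑(S.erase s(x,y)) : Set (Sym2 V)) := by
  ext u v
  simp only [SimpleGraph.sdiff_adj, SimpleGraph.fromEdgeSet_adj, Finset.coe_erase,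
    Set.mem_diff, Set.mem_singleton_iff, Finset.mem_coe]
  tauto

lemma isAcyclic_iff_forest {S : Finset (Sym2 V)} (hS : ∀ ε ∈ S, ¬ ε.IsDiag) :
    (SimpleGraph.fromEdgeSet (↑S : Set (Sym2 V))).IsAcyclic ↔ Forest S := by
  constructor
  · -- acyclic → forest, by strong induction on S
    classical
    induction S using Finset.strongInduction with
    | _ S ih =>
      intro hac
      rcases Finset.eq_empty_or_nonempty S with rfl | ⟨ε, hε⟩
      · unfold Forest
        rw [ncomp_empty]
        simp
      · induction ε using Sym2.inductionOn with
        | hf x y =>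
          have hxy : x ≠ y := fun h => hS _ hε (by rw [h]; simp)
          have herase : S = insert s(x,y) (S.erase s(x,y)) := (Finset.insert_erase hε).symm
          have hS' : ∀ ε ∈ S.erase s(x,y), ¬ ε.IsDiag := fun ε hε' =>
            hS _ (Finset.erase_subset _ _ hε')
          have hle : SimpleGraph.fromEdgeSet (↑(S.erase s(x,y)) : Set (Sym2 V)) ≤
              SimpleGraph.fromEdgeSet (↑S : Set (Sym2 V)) := by
            apply SimpleGraph.fromEdgeSet_mono
            exact_mod_cast Finset.erase_subset _ _
          have hac' := isAcyclic_mono hle hac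
          have hforest' := ih (S.erase s(x,y)) (Finset.erase_ssubset hε) hS' hac'
          -- x and y are not connected in S.erase s(x,y), since s(x,y) is a bridge
          have hbridge : (SimpleGraph.fromEdgeSet (↑S : Set (Sym2 V))).IsBridge s(x,y) := by
            apply SimpleGraph.isAcyclic_iff_forall_adj_isBridge.mp hac
            rw [SimpleGraph.fromEdgeSet_adj]
            exact ⟨hε, hxy⟩
          rw [SimpleGraph.isBridge_iff, SimpleGraph.deleteEdges, fromEdgeSet_erase] at hbridge
          have hnconn : ¬ conn (S.erase s(x,y)) x y := by
            intro hc
            exact hbridge ((reachable_iff_conn hS' x y).mpr hc)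
          have hninsert := ncomp_insert_of_not_conn hnconn
          unfold Forest at hforest' ⊢
          rw [herase, Finset.card_insert_of_notMem (Finset.notMem_erase _ _)]
          omega
  · -- forest → acyclic
    intro hforest
    by_contra hnac
    rw [SimpleGraph.isAcyclic_iff_forall_adj_isBridge] at hnac
    push_neg at hnac
    obtain ⟨x, y, hadj, hnb⟩ := hnac
    rw [SimpleGraph.isBridge_iff, SimpleGraph.deleteEdges, fromEdgeSet_erase] at hnb
    rw [SimpleGraph.fromEdgeSet_adj] at hadj
    obtain ⟨hmem, hxy⟩ := hadj
    push_neg at hnb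
    have hS' : ∀ ε ∈ S.erase s(x,y), ¬ ε.IsDiag := fun ε hε' =>
      hS _ (Finset.erase_subset _ _ hε')
    have hreach := hnb
    have hconn : conn (S.erase s(x,y)) x y := (reachable_iff_conn hS' x y).mp hreach
    have heq := ncomp_insert_of_conn hconn
    rw [Finset.insert_erase hmem] at heq
    have hge := card_le_card_add_ncomp (S.erase s(x,y))
    have hcarderase : (S.erase s(x,y)).card = S.card - 1 := Finset.card_erase_of_mem hmem
    have hcardpos : 1 ≤ S.card := Finset.card_pos.mpr ⟨_, hmem⟩
    unfold Forest at hforest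
    omega
end Bridge
-- BEGIN
section Support

lemma conn_stay {S : Finset (Sym2 V)} {W : Finset V}
    (hW : ∀ ε ∈ S, ∀ v ∈ ε, v ∈ W) {a b : V} (h : conn S a b) :
    a = b ∨ (a ∈ W ∧ b ∈ W) := by
  induction h with
  | refl => exact Or.inl rfl
  | @tail c d hac hcd ih =>
    have hc : c ∈ W := hW _ hcd _ (Sym2.mem_mk_left c d)
    have hd : d ∈ W := hW _ hcd _ (Sym2.mem_mk_right c d)
    rcases ih with rfl | ⟨ha, _⟩
    · exact Or.inr ⟨hc, hd⟩
    · exact Or.inr ⟨ha, hd⟩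

/-- A forest whose edges live inside `W` has at most `|W| - 1` edges. -/
lemma forest_card_lt_of_support {S : Finset (Sym2 V)} {W : Finset V}
    (hf : Forest S) (hWne : W.Nonempty) (hW : ∀ ε ∈ S, ∀ v ∈ ε, v ∈ W) :
    S.card + 1 ≤ W.card := by
  classical
  have hkey : Fintype.card V - W.card + 1 ≤ ncomp S := by
    have hcard : Fintype.card (Option {v : V // v ∉ W}) = Fintype.card V - W.card + 1 := by
      rw [Fintype.card_option]
      congr 1
      rw [Fintype.card_subtype_compl, Fintype.card_coe]
    rw [← hcard]
    obtain ⟨w₀, hw₀⟩ := hWne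
    apply le_ncomp_of_map (g := fun v => if hv : v ∈ W then none else some ⟨v, hv⟩)
    · intro a b hab
      rcases conn_stay hW hab with rfl | ⟨ha, hb⟩
      · rfl
      · simp [ha, hb]
    · rintro (_ | ⟨v, hv⟩)
      · exact ⟨w₀, by simp [hw₀]⟩
      · exact ⟨v, by simp [hv]⟩
  have h1 := hf
  unfold Forest at h1
  have h2 : W.card ≤ Fintype.card V := by
    simpa using Finset.card_le_card (Finset.subset_univ W)
  omega

end Support

section Clique

/-- All non-diagonal edges within a finite vertex set. -/
def cliqueEdges (W : Finset V) : Finset (Sym2 V) :=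
  ((W ×ˢ W).filter (fun p => p.1 ≠ p.2)).image (fun p => s(p.1, p.2))

lemma mem_cliqueEdges {W : Finset V} {ε : Sym2 V} :
    ε ∈ cliqueEdges W ↔ ¬ ε.IsDiag ∧ ∀ v ∈ ε, v ∈ W := by
  induction ε using Sym2.inductionOn with
  | hf x y =>
    simp only [cliqueEdges, Finset.mem_image, Finset.mem_filter, Finset.mem_product]
    constructor
    · rintro ⟨⟨a, b⟩, ⟨⟨haW, hbW⟩, hne⟩, heq⟩
      rw [Sym2.eq_iff] at heq
      constructor
      · rw [Sym2.mk_isDiag_iff]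
        rcases heq with ⟨rfl, rfl⟩ | ⟨rfl, rfl⟩
        · exact hne
        · exact fun h => hne h.symm
      · intro v hv
        rw [Sym2.mem_iff] at hv
        rcases heq with ⟨rfl, rfl⟩ | ⟨rfl, rfl⟩ <;> rcases hv with rfl | rfl <;> assumption
    · rintro ⟨hdiag, hmem⟩
      rw [Sym2.mk_isDiag_iff] at hdiag
      exact ⟨⟨x, y⟩, ⟨⟨hmem x (by simp), hmem y (by simp)⟩, hdiag⟩, rfl⟩

end Clique

section Classes

variable (S : Finset (Sym2 V))

noncomputable def classOf (q : Quotient (connSetoid S)) : Finset V :=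
  Finset.univ.filter (fun v => Quotient.mk (connSetoid S) v = q)

lemma mem_classOf {q : Quotient (connSetoid S)} {v : V} :
    v ∈ classOf S q ↔ Quotient.mk (connSetoid S) v = q := by
  simp [classOf]

lemma classOf_nonempty (q : Quotient (connSetoid S)) : (classOf S q).Nonempty := by
  refine ⟨q.out, ?_⟩
  rw [mem_classOf]
  simp

lemma classOf_injective : Function.Injective (classOf S) := by
  intro q q' h
  obtain ⟨v, hv⟩ := classOf_nonempty S q
  have hv' : v ∈ classOf S q' := h ▸ hv
  rw [mem_classOf] at hv hv'
  rw [← hv, hv']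

noncomputable def classes : Finset (Finset V) :=
  Finset.univ.image (classOf S)

lemma classes_card : (classes S).card = ncomp S := by
  rw [classes, Finset.card_image_of_injective _ (classOf_injective S), Finset.card_univ]
  rfl

lemma classes_nonempty : ∀ W ∈ classes S, W.Nonempty := by
  intro W hW
  obtain ⟨q, _, rfl⟩ := Finset.mem_image.mp hW
  exact classOf_nonempty S q

lemma classes_partition : ∀ x : V, ∃! W, W ∈ classes S ∧ x ∈ W := by
  intro x
  refine ⟨classOf S (Quotient.mk (connSetoid S) x),
    ⟨Finset.mem_image_of_mem _ (Finset.mem_univ _), (mem_classOf S).mpr rfl⟩, ?_⟩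
  rintro W ⟨hW, hxW⟩
  obtain ⟨q, _, rfl⟩ := Finset.mem_image.mp hW
  rw [mem_classOf] at hxW
  rw [hxW]

lemma sum_classes_card : ∑ W ∈ classes S, W.card = Fintype.card V := by
  rw [classes, Finset.sum_image (fun q _ q' _ h => classOf_injective S h)]
  have : ∀ q ∈ (Finset.univ : Finset (Quotient (connSetoid S))),
      (classOf S q).card = (Finset.univ.filter
        (fun v => Quotient.mk (connSetoid S) v = q)).card := fun q _ => rfl
  rw [Finset.sum_congr rfl this, ← Finset.card_eq_sum_card_fiberwise
    (fun v _ => Finset.mem_univ (Quotient.mk (connSetoid S) v)), Finset.card_univ]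

end Classes
-- BEGIN


section Duality

variable {U M : Type} [Fintype U] [Fintype M] [DecidableEq U] [DecidableEq M]

lemma edgeSet_eq (F : Finset M) (e : M → Sym2 U) :
    {s : Sym2 U | ∃ f ∈ F, e f = s} = (↑(F.image e) : Set (Sym2 U)) := by
  ext s
  simp [eq_comm]

lemma weak_duality (Uf : M → Finset U) (hne : ∀ f, (Uf f).Nonempty)
    (F : Finset M) (e : M → Sym2 U) (hFRS : IsFRS Uf F e)
    (𝒲 : Finset (Finset U)) (h1 : ∀ W ∈ 𝒲, W.Nonempty)
    (h2 : ∀ x : U, ∃! W, W ∈ 𝒲 ∧ x ∈ W) :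
    (F.card : ℤ) ≤ (Fintype.card M : ℤ) - ∑ W ∈ 𝒲,
      (((Finset.univ.filter fun f => Uf f ⊆ W).card : ℤ) - ((W.card : ℤ) - 1)) := by
  classical
  obtain ⟨hprop, hinj, hac⟩ := hFRS
  set Se : Finset (Sym2 U) := F.image e with hSe
  have hnd : ∀ ε ∈ Se, ¬ ε.IsDiag := by
    rintro ε hε
    obtain ⟨f, hf, rfl⟩ := Finset.mem_image.mp hε
    exact (hprop f hf).1
  have hforest : Forest Se := by
    rw [← isAcyclic_iff_forest hnd]
    rwa [edgeSet_eq F e] at hac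
  -- bound on represented classes inside each part
  have haW : ∀ W ∈ 𝒲, ((F.filter (fun f => Uf f ⊆ W)).card : ℤ) ≤ (W.card : ℤ) - 1 := by
    intro W hW
    set T : Finset (Sym2 U) := (F.filter (fun f => Uf f ⊆ W)).image e with hT
    have hTsub : T ⊆ Se := Finset.image_subset_image (Finset.filter_subset _ _)
    have hTforest : Forest T := hforest.mono hTsub
    have hTsupp : ∀ ε ∈ T, ∀ v ∈ ε, v ∈ W := by
      rintro ε hε v hv
      obtain ⟨f, hf, rfl⟩ := Finset.mem_image.mp hε
      obtain ⟨hfF, hfW⟩ := Finset.mem_filter.mp hf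
      exact hfW ((hprop f hfF).2 v hv)
    have hTcard : T.card = (F.filter (fun f => Uf f ⊆ W)).card := by
      apply Finset.card_image_of_injOn
      exact hinj.mono (by exact_mod_cast Finset.filter_subset _ _)
    have := forest_card_lt_of_support hTforest (h1 W hW) hTsupp
    rw [hTcard] at this
    have hfc := this
    push_cast
    omega
  -- unrepresented elements
  set B : Finset U → Finset M := fun W => Finset.univ.filter (fun f => f ∉ F ∧ Uf f ⊆ W)
    with hB
  have hmW : ∀ W ∈ 𝒲, ((Finset.univ.filter fun f => Uf f ⊆ W).card : ℤ) ≤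
      ((F.filter (fun f => Uf f ⊆ W)).card : ℤ) + ((B W).card : ℤ) := by
    intro W _
    have hsub : (Finset.univ.filter fun f => Uf f ⊆ W) ⊆
        (F.filter (fun f => Uf f ⊆ W)) ∪ B W := by
      intro f hf
      rw [Finset.mem_filter] at hf
      by_cases hfF : f ∈ F
      · exact Finset.mem_union_left _ (Finset.mem_filter.mpr ⟨hfF, hf.2⟩)
      · exact Finset.mem_union_right _ (Finset.mem_filter.mpr ⟨Finset.mem_univ _, hfF, hf.2⟩)
    have := le_trans (Finset.card_le_card hsub) (Finset.card_union_le _ _)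
    exact_mod_cast this
  have hBdisj : ∀ W ∈ 𝒲, ∀ W' ∈ 𝒲, W ≠ W' → Disjoint (B W) (B W') := by
    intro W hW W' hW' hne'
    rw [Finset.disjoint_left]
    intro f hf hf'
    rw [hB] at hf hf'
    simp only [Finset.mem_filter] at hf hf'
    obtain ⟨x, hx⟩ := hne f
    obtain ⟨Wx, _, huniq⟩ := h2 x
    exact hne' ((huniq W ⟨hW, hf.2.2 hx⟩).trans (huniq W' ⟨hW', hf'.2.2 hx⟩).symm)
  have hBsum : ∑ W ∈ 𝒲, (B W).card ≤ Fintype.card M - F.card := by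
    rw [← Finset.card_biUnion hBdisj]
    have hsub : 𝒲.biUnion B ⊆ Finset.univ \ F := by
      intro f hf
      obtain ⟨W, _, hfW⟩ := Finset.mem_biUnion.mp hf
      rw [hB] at hfW
      simp only [Finset.mem_filter] at hfW
      exact Finset.mem_sdiff.mpr ⟨Finset.mem_univ _, hfW.2.1⟩
    have := Finset.card_le_card hsub
    rwa [Finset.card_sdiff_of_subset (Finset.subset_univ F), Finset.card_univ] at this
  have hFM : F.card ≤ Fintype.card M := by
    simpa using Finset.card_le_card (Finset.subset_univ F)
  have hterm : ∑ W ∈ 𝒲, (((Finset.univ.filter fun f => Uf f ⊆ W).card : ℤ) -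
      ((W.card : ℤ) - 1)) ≤ ∑ W ∈ 𝒲, ((B W).card : ℤ) := by
    apply Finset.sum_le_sum
    intro W hW
    have := hmW W hW
    have := haW W hW
    omega
  have hcast : (∑ W ∈ 𝒲, ((B W).card : ℤ)) ≤ (Fintype.card M : ℤ) - F.card := by
    have : ((∑ W ∈ 𝒲, (B W).card : ℕ) : ℤ) ≤ ((Fintype.card M - F.card : ℕ) : ℤ) := by
      exact_mod_cast hBsum
    push_cast [hFM] at this
    omega
  linarith [hterm, hcast]

end Duality
-- BEGIN
section Transport

lemma conn_map {U W : Type} [Fintype U] [DecidableEq U] [Fintype W] [DecidableEq W]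
    {j : U → W} {S : Finset (Sym2 U)} {X : Finset (Sym2 W)}
    (hX : S.image (Sym2.map j) ⊆ X) {a b : U} (h : conn S a b) :
    conn X (j a) (j b) := by
  induction h with
  | refl => exact Relation.ReflTransGen.refl
  | @tail c d _ hcd ih =>
    refine ih.tail ?_
    have : Sym2.map j s(c, d) ∈ X := hX (Finset.mem_image_of_mem _ hcd)
    rwa [Sym2.map_pair_eq] at this

variable {U : Type} [Fintype U] [DecidableEq U] {d : ℕ}

abbrev Vext (U : Type) (d : ℕ) : Type := U ⊕ (Fin d × Bool)

noncomputable def dummyEdges (U : Type) [Fintype U] [DecidableEq U] (d : ℕ) :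
    Finset (Sym2 (Vext U d)) :=
  (Finset.univ : Finset (Fin d)).image
    (fun i => s((Sum.inr (i, false) : Vext U d), Sum.inr (i, true)))

lemma card_vext : Fintype.card (Vext U d) = Fintype.card U + 2 * d := by
  simp [Vext, Fintype.card_sum, Fintype.card_prod]
  ring

lemma ncomp_image_union_dummy_le (A : Finset (Sym2 U)) :
    ncomp ((A.image (Sym2.map (Sum.inl : U → Vext U d))) ∪ dummyEdges U d) ≤ ncomp A + d := by
  classical
  set X := (A.image (Sym2.map (Sum.inl : U → Vext U d))) ∪ dummyEdges U d with hX
  set R : Finset (Vext U d) :=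
    (Finset.univ.image (fun q : Quotient (connSetoid A) => (Sum.inl q.out : Vext U d))) ∪
    (Finset.univ.image (fun i : Fin d => (Sum.inr (i, false) : Vext U d))) with hR
  have hcover : ∀ v : Vext U d, ∃ r ∈ R, conn X v r := by
    rintro (u | ⟨i, bb⟩)
    · refine ⟨Sum.inl ((Quotient.mk (connSetoid A) u).out), ?_, ?_⟩
      · exact Finset.mem_union_left _ (Finset.mem_image_of_mem _ (Finset.mem_univ _))
      · exact conn_map (j := (Sum.inl : U → Vext U d)) (S := A)
          Finset.subset_union_left (conn_of_mk_eq (by simp))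
    · refine ⟨Sum.inr (i, false), ?_, ?_⟩
      · exact Finset.mem_union_right _ (Finset.mem_image_of_mem _ (Finset.mem_univ _))
      · cases bb
        · exact Relation.ReflTransGen.refl
        · apply conn_step
          rw [Sym2.eq_swap]
          exact Finset.mem_union_right _ (Finset.mem_image_of_mem _ (Finset.mem_univ _))
  have hcard : R.card ≤ ncomp A + d := by
    apply le_trans (Finset.card_union_le _ _)
    have h1 : (Finset.univ.image
        (fun q : Quotient (connSetoid A) => (Sum.inl q.out : Vext U d))).card ≤ ncomp A := by
      apply le_trans (Finset.card_image_le)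
      simp [ncomp]
    have h2 : (Finset.univ.image (fun i : Fin d => (Sum.inr (i, false) : Vext U d))).card ≤ d := by
      apply le_trans (Finset.card_image_le)
      simp
    omega
  exact le_trans (ncomp_le_of_cover hcover) hcard

lemma ncomp_image_inl_ge (A : Finset (Sym2 U)) :
    ncomp A + 2 * d ≤ ncomp (A.image (Sym2.map (Sum.inl : U → Vext U d))) := by
  classical
  have hcard : Fintype.card ((Quotient (connSetoid A)) ⊕ (Fin d × Bool)) = ncomp A + 2 * d := by
    simp [Fintype.card_sum, Fintype.card_prod, ncomp]
    ring
  rw [← hcard]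
  set g : Vext U d → (Quotient (connSetoid A)) ⊕ (Fin d × Bool) :=
    fun v => match v with
      | Sum.inl u => Sum.inl (Quotient.mk (connSetoid A) u)
      | Sum.inr p => Sum.inr p
    with hg
  apply le_ncomp_of_map (g := g)
  · intro a b hab
    induction hab with
    | refl => rfl
    | @tail c dd _ hcd ih =>
      refine ih.trans ?_
      obtain ⟨ε, hεA, hmap⟩ := Finset.mem_image.mp hcd
      induction ε using Sym2.inductionOn with
      | hf p q =>
        rw [Sym2.map_pair_eq, Sym2.eq_iff] at hmap
        have hpq : g (Sum.inl p) = g (Sum.inl q) := by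
          simp only [hg]
          exact congrArg Sum.inl (mk_eq_of_conn (conn_step hεA))
        rcases hmap with ⟨hc, hd⟩ | ⟨hc, hd⟩
        · rw [← hc, ← hd]; exact hpq
        · rw [← hc, ← hd]; exact hpq.symm
  · rintro (q | p)
    · exact ⟨Sum.inl q.out, by simp [hg]⟩
    · exact ⟨Sum.inr p, rfl⟩

end Transport

section ClassesValue

variable {U M : Type} [Fintype U] [Fintype M] [DecidableEq U] [DecidableEq M]

lemma classes_value (Uf : M → Finset U) (hne : ∀ f, (Uf f).Nonempty) (F' : Finset M) :
    (Fintype.card M : ℤ) - ∑ W ∈ classes (F'.sup fun f => cliqueEdges (Uf f)),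
      (((Finset.univ.filter fun f => Uf f ⊆ W).card : ℤ) - ((W.card : ℤ) - 1))
    ≤ (Fintype.card M : ℤ) - F'.card +
      ((Fintype.card U : ℤ) - ncomp (F'.sup fun f => cliqueEdges (Uf f))) := by
  classical
  set S := F'.sup fun f => cliqueEdges (Uf f) with hS
  have hA : ∑ W ∈ classes S, ((W.card : ℤ) - 1) = (Fintype.card U : ℤ) - ncomp S := by
    rw [Finset.sum_sub_distrib, Finset.sum_const, ← classes_card (S := S)]
    have : ∑ W ∈ classes S, (W.card : ℤ) = ((∑ W ∈ classes S, W.card : ℕ) : ℤ) := by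
      push_cast; ring
    rw [this, sum_classes_card]
    simp [mul_comm]
  have hB : (F'.card : ℤ) ≤ ∑ W ∈ classes S, ((Finset.univ.filter fun f => Uf f ⊆ W).card : ℤ) := by
    have hsub : F' ⊆ (classes S).biUnion
        (fun W => Finset.univ.filter fun f => Uf f ⊆ W) := by
      intro f hf
      obtain ⟨x₀, hx₀⟩ := hne f
      apply Finset.mem_biUnion.mpr
      refine ⟨classOf S (Quotient.mk (connSetoid S) x₀),
        Finset.mem_image_of_mem _ (Finset.mem_univ _), ?_⟩
      rw [Finset.mem_filter]
      refine ⟨Finset.mem_univ _, fun v hv => ?_⟩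
      rw [mem_classOf]
      apply mk_eq_of_conn
      by_cases hvx : v = x₀
      · subst hvx; exact Relation.ReflTransGen.refl
      · apply conn_step
        apply Finset.mem_sup.mpr ⟨f, hf, ?_⟩
        rw [mem_cliqueEdges]
        constructor
        · rw [Sym2.mk_isDiag_iff]; exact hvx
        · intro w hw
          rw [Sym2.mem_iff] at hw
          rcases hw with rfl | rfl <;> assumption
    have h1 : F'.card ≤ ∑ W ∈ classes S, (Finset.univ.filter fun f => Uf f ⊆ W).card :=
      le_trans (Finset.card_le_card hsub) (Finset.card_biUnion_le)
    exact_mod_cast h1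
  have hsplit : ∑ W ∈ classes S, (((Finset.univ.filter fun f => Uf f ⊆ W).card : ℤ) -
      ((W.card : ℤ) - 1)) = (∑ W ∈ classes S, ((Finset.univ.filter fun f => Uf f ⊆ W).card : ℤ))
      - ∑ W ∈ classes S, ((W.card : ℤ) - 1) := Finset.sum_sub_distrib _ _
  rw [hsplit, hA]
  linarith

end ClassesValue
-- BEGIN
section SupHelpers

variable {α β : Type} [DecidableEq α] [DecidableEq β]

lemma sup_union_const {F' : Finset α} (hF' : F'.Nonempty) (A : α → Finset β) (D : Finset β) :
    F'.sup (fun f => A f ∪ D) = F'.sup A ∪ D := by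
  classical
  induction F' using Finset.induction with
  | empty => exact absurd hF' (by simp)
  | @insert a s ha ih =>
    rcases s.eq_empty_or_nonempty with rfl | hs
    · simp
    · rw [Finset.sup_insert, Finset.sup_insert, ih hs]
      show (A a ∪ D) ∪ (s.sup A ∪ D) = (A a ∪ s.sup A) ∪ D
      rw [Finset.union_union_union_comm, Finset.union_self]


lemma sup_image_comm {γ : Type} [DecidableEq γ] (F' : Finset α) (A : α → Finset β)
    (g : β → γ) : F'.sup (fun f => (A f).image g) = (F'.sup A).image g := by
  classical
  ext ε
  simp only [Finset.mem_sup, Finset.mem_image]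
  tauto

end SupHelpers
end FRS

open FRS in
theorem stmt_11 {U M : Type} [Fintype U] [Fintype M] [DecidableEq U] [DecidableEq M]
    (Uf : M → Finset U) (hne : ∀ f, (Uf f).Nonempty) :
    ∃ n : ℕ,
      IsGreatest {k | ∃ (F : Finset M) (e : M → Sym2 U), IsFRS Uf F e ∧ F.card = k} n ∧
      IsLeast {z : ℤ | ∃ 𝒲 : Finset (Finset U),
        ((∀ W ∈ 𝒲, W.Nonempty) ∧ ∀ x : U, ∃! W, W ∈ 𝒲 ∧ x ∈ W) ∧
        z = (Fintype.card M : ℤ) - ∑ W ∈ 𝒲,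
          (((Finset.univ.filter fun f => Uf f ⊆ W).card : ℤ) - ((W.card : ℤ) - 1))}
        (n : ℤ) := by
  classical
  set SS : Set ℕ := {k | ∃ (F : Finset M) (e : M → Sym2 U), IsFRS Uf F e ∧ F.card = k}
    with hSS
  set TT : Set ℤ := {z : ℤ | ∃ 𝒲 : Finset (Finset U),
      ((∀ W ∈ 𝒲, W.Nonempty) ∧ ∀ x : U, ∃! W, W ∈ 𝒲 ∧ x ∈ W) ∧
      z = (Fintype.card M : ℤ) - ∑ W ∈ 𝒲,
        (((Finset.univ.filter fun f => Uf f ⊆ W).card : ℤ) - ((W.card : ℤ) - 1))} with hTT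
  -- SS is nonempty and bounded
  have h0 : 0 ∈ SS := by
    refine ⟨∅, fun f => s((hne f).choose, (hne f).choose), ⟨?_, ?_, ?_⟩, rfl⟩
    · simp
    · simp
    · have hempty : {s : Sym2 U | ∃ f ∈ (∅ : Finset M),
          (fun f => s((hne f).choose, (hne f).choose)) f = s} = ∅ := by simp
      rw [hempty, SimpleGraph.fromEdgeSet_empty]
      exact SimpleGraph.isAcyclic_bot
  have hbdd : ∀ k ∈ SS, k ≤ Fintype.card M := by
    rintro k ⟨F, e, _, rfl⟩
    simpa using Finset.card_le_card (Finset.subset_univ F)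
  have hbddAbove : BddAbove SS := ⟨Fintype.card M, fun k hk => hbdd k hk⟩
  set n : ℕ := sSup SS with hn
  have hnmem : n ∈ SS := Nat.sSup_mem ⟨0, h0⟩ hbddAbove
  have hnub : ∀ k ∈ SS, k ≤ n := fun k hk => le_csSup hbddAbove hk
  -- n is a lower bound for TT (weak duality)
  have hTlb : ∀ z ∈ TT, (n : ℤ) ≤ z := by
    rintro z ⟨𝒲, ⟨hW1, hW2⟩, rfl⟩
    obtain ⟨F, e, hFRS, hFcard⟩ := hnmem
    rw [← hFcard]
    exact weak_duality Uf hne F e hFRS 𝒲 hW1 hW2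
  -- TT is nonempty: use the discrete partition
  have hTne : ∃ z : ℤ, z ∈ TT := by
    refine ⟨_, Finset.univ.image (fun x : U => ({x} : Finset U)), ⟨?_, ?_⟩, rfl⟩
    · intro W hW
      obtain ⟨x, _, rfl⟩ := Finset.mem_image.mp hW
      exact ⟨x, Finset.mem_singleton_self x⟩
    · intro x
      refine ⟨{x}, ⟨Finset.mem_image_of_mem _ (Finset.mem_univ _),
        Finset.mem_singleton_self x⟩, ?_⟩
      rintro W ⟨hW, hxW⟩
      obtain ⟨y, _, rfl⟩ := Finset.mem_image.mp hW
      rw [Finset.mem_singleton] at hxW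
      rw [hxW]
  -- the least element of TT
  obtain ⟨β, hβmem, hβlb⟩ := Int.exists_least_of_bdd
    (P := fun z => z ∈ TT) ⟨(n : ℤ), fun z hz => hTlb z hz⟩ hTne
  have hβn : (n : ℤ) ≤ β := hTlb β hβmem
  have hβ0 : (0 : ℤ) ≤ β := le_trans (by positivity) hβn
  have hβM : β ≤ (Fintype.card M : ℤ) := by
    -- value of the discrete partition is at most card M
    obtain ⟨z₀, hz₀⟩ := hTne
    -- redo: extract the discrete partition value directly
    have hdisc : ((Fintype.card M : ℤ) - ∑ W ∈ Finset.univ.image (fun x : U => ({x} : Finset U)),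
        (((Finset.univ.filter fun f => Uf f ⊆ W).card : ℤ) - ((W.card : ℤ) - 1))) ∈ TT := by
      refine ⟨Finset.univ.image (fun x : U => ({x} : Finset U)), ⟨?_, ?_⟩, rfl⟩
      · intro W hW
        obtain ⟨x, _, rfl⟩ := Finset.mem_image.mp hW
        exact ⟨x, Finset.mem_singleton_self x⟩
      · intro x
        refine ⟨{x}, ⟨Finset.mem_image_of_mem _ (Finset.mem_univ _),
          Finset.mem_singleton_self x⟩, ?_⟩
        rintro W ⟨hW, hxW⟩
        obtain ⟨y, _, rfl⟩ := Finset.mem_image.mp hW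
        rw [Finset.mem_singleton] at hxW
        rw [hxW]
    have hval : ∀ W ∈ Finset.univ.image (fun x : U => ({x} : Finset U)),
        (0 : ℤ) ≤ (((Finset.univ.filter fun f => Uf f ⊆ W).card : ℤ) - ((W.card : ℤ) - 1)) := by
      intro W hW
      obtain ⟨x, _, rfl⟩ := Finset.mem_image.mp hW
      simp
    have := hβlb _ hdisc
    have hsum : (0 : ℤ) ≤ ∑ W ∈ Finset.univ.image (fun x : U => ({x} : Finset U)),
        (((Finset.univ.filter fun f => Uf f ⊆ W).card : ℤ) - ((W.card : ℤ) - 1)) :=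
      Finset.sum_nonneg hval
    linarith
  -- set up the extended Rado instance
  set b : ℕ := β.toNat with hb
  have hbβ : (b : ℤ) = β := Int.toNat_of_nonneg hβ0
  have hbM : b ≤ Fintype.card M := by exact_mod_cast hbβ ▸ hβM
  set d : ℕ := Fintype.card M - b with hd
  have hdβ : (d : ℤ) = (Fintype.card M : ℤ) - β := by
    rw [hd]
    push_cast [hbM]
    omega
  set m2 : Sym2 U → Sym2 (Vext U d) := Sym2.map (Sum.inl : U → Vext U d) with hm2
  have hm2inj : Function.Injective m2 := Sym2.map.injective Sum.inl_injective
  set E : M → Finset (Sym2 U) := fun f => cliqueEdges (Uf f) with hE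
  set E' : M → Finset (Sym2 (Vext U d)) := fun f => (E f).image m2 ∪ dummyEdges U d with hE'
  have cond : ∀ F' : Finset M, (F'.card : ℤ) ≤
      (Fintype.card (Vext U d) : ℤ) - ncomp (F'.sup E') := by
    intro F'
    rcases F'.eq_empty_or_nonempty with rfl | hF'ne
    · rw [Finset.sup_empty]
      have : ((⊥ : Finset (Sym2 (Vext U d)))) = ∅ := rfl
      rw [this, ncomp_empty]
      simp
    · have hsup : F'.sup E' = (F'.sup E).image m2 ∪ dummyEdges U d := by
        rw [hE']
        rw [sup_union_const hF'ne (fun f => (E f).image m2) (dummyEdges U d)]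
        rw [sup_image_comm]
      rw [hsup]
      have h1 : ncomp ((F'.sup E).image m2 ∪ dummyEdges U d) ≤ ncomp (F'.sup E) + d :=
        ncomp_image_union_dummy_le (F'.sup E)
      have h2 : β ≤ (Fintype.card M : ℤ) - F'.card +
          ((Fintype.card U : ℤ) - ncomp (F'.sup E)) := by
        have hmem : ((Fintype.card M : ℤ) - ∑ W ∈ classes (F'.sup fun f => cliqueEdges (Uf f)),
            (((Finset.univ.filter fun f => Uf f ⊆ W).card : ℤ) - ((W.card : ℤ) - 1))) ∈ TT := by
          exact ⟨classes (F'.sup fun f => cliqueEdges (Uf f)),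
            ⟨classes_nonempty _, classes_partition _⟩, rfl⟩
        have := hβlb _ hmem
        have h3 := classes_value Uf hne F'
        rw [hE]
        linarith
      rw [card_vext]
      have h1' : (ncomp ((F'.sup E).image m2 ∪ dummyEdges U d) : ℤ) ≤
          (ncomp (F'.sup E) : ℤ) + d := by exact_mod_cast h1
      push_cast
      linarith
  obtain ⟨e', hmem', hinj', hforest'⟩ := rado_aux (∑ f : M, (E' f).card) E' le_rfl cond
  -- the represented subfamily
  set F : Finset M := Finset.univ.filter (fun f => e' f ∈ (E f).image m2) with hF
  have hcardF : Fintype.card M - d ≤ F.card := by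
    set K : Finset M := Finset.univ.filter (fun f => ¬ (e' f ∈ (E f).image m2)) with hK
    have hKD : ∀ f ∈ K, e' f ∈ dummyEdges U d := by
      intro f hf
      rw [hK, Finset.mem_filter] at hf
      have := hmem' f
      rw [hE'] at this
      rcases Finset.mem_union.mp this with h | h
      · exact absurd h hf.2
      · exact h
    have hKcard : K.card ≤ d := by
      have h1 : K.card ≤ (dummyEdges U d).card :=
        Finset.card_le_card_of_injOn (fun f => e' f) hKD (hinj'.injOn)
      have h2 : (dummyEdges U d).card ≤ d := by
        apply le_trans Finset.card_image_le
        simp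
      omega
    have hsplit : F.card + K.card = Fintype.card M := by
      rw [hF, hK, Finset.card_filter_add_card_filter_not]
      exact Finset.card_univ
    omega
  have hbF : b ≤ F.card := by omega
  -- pull the chosen edges back to U
  set e : M → Sym2 U := fun f =>
    if h : ∃ ε, ε ∈ E f ∧ m2 ε = e' f then h.choose
    else s((hne f).choose, (hne f).choose) with he
  have hspec : ∀ f ∈ F, e f ∈ E f ∧ m2 (e f) = e' f := by
    intro f hf
    rw [hF, Finset.mem_filter] at hf
    obtain ⟨ε, hε, hmap⟩ := Finset.mem_image.mp hf.2
    have hex : ∃ ε, ε ∈ E f ∧ m2 ε = e' f := ⟨ε, hε, hmap⟩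
    rw [he]
    simp only [dif_pos hex]
    exact ⟨hex.choose_spec.1, hex.choose_spec.2⟩
  have hFRS : IsFRS Uf F e := by
    refine ⟨?_, ?_, ?_⟩
    · intro f hf
      have := (hspec f hf).1
      rw [hE] at this
      exact mem_cliqueEdges.mp this
    · intro f hf g hg hfg
      have h1 := (hspec f hf).2
      have h2 := (hspec g hg).2
      apply hinj'
      rw [← h1, ← h2, hfg]
    · rw [edgeSet_eq F e]
      have hnd : ∀ ε ∈ F.image e, ¬ ε.IsDiag := by
        rintro ε hε
        obtain ⟨f, hf, rfl⟩ := Finset.mem_image.mp hε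
        have := (hspec f hf).1
        rw [hE] at this
        exact (mem_cliqueEdges.mp this).1
      rw [isAcyclic_iff_forest hnd]
      -- transport the forest property
      have himage : (F.image e).image m2 = F.image e' := by
        rw [Finset.image_image]
        apply Finset.image_congr
        intro f hf
        exact (hspec f (by exact_mod_cast hf)).2
      have hsub : F.image e' ⊆ Finset.univ.image e' :=
        Finset.image_subset_image (Finset.subset_univ F)
      have hforestT : Forest ((F.image e).image m2) := by
        rw [himage]
        exact hforest'.mono hsub
      have ht2 : ncomp (F.image e) + 2 * d ≤ ncomp ((F.image e).image m2) :=
        ncomp_image_inl_ge (F.image e)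
      have hcardeq : ((F.image e).image m2).card = (F.image e).card :=
        Finset.card_image_of_injective _ hm2inj
      unfold Forest at hforestT ⊢
      rw [card_vext] at hforestT
      omega
  -- conclude
  have hkSS : F.card ∈ SS := ⟨F, e, hFRS, rfl⟩
  have hkn : F.card ≤ n := hnub _ hkSS
  have hnβ : (n : ℤ) = β := by
    have h1 : (b : ℤ) ≤ (F.card : ℤ) := by exact_mod_cast hbF
    have h2 : (F.card : ℤ) ≤ (n : ℤ) := by exact_mod_cast hkn
    omega
  exact ⟨n, ⟨hnmem, fun k hk => hnub k hk⟩, by rw [hnβ]; exact ⟨hβmem, hβlb⟩⟩
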